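/- Let c : ℕ → ℤ be a sequence. Suppose there exist positive integers p, p', polynomials P, P' ∈ ℚ[X] and a threshold n_0 such that ∑_{l=0}^{pn-1} c_l = P(n) and ∑_{l=0}^{p'n-1} c_l = P'(n) for all n ≥ n_0. Then P(0) = P'(0). In other words, the periodic constant of the series ∑ c_l t^l is independent of the chosen period. -/

import Mathlib

/-- The periodic constant of a series is independent of the chosen period:
if for two periods `p, p'` the counting functions agree with polynomials `P, P'`
for all large `n`, then `P(0) = P'(0)`. -/
theorem stmt4 (c : ℕ → ℤ) (p p' : ℕ) (hp : 0 < p) (hp' : 0 < p')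
    (P P' : Polynomial ℚ) (n₀ : ℕ)
    (hP : ∀ n : ℕ, n₀ ≤ n → ∑ l ∈ Finset.range (p * n), (c l : ℚ) = P.eval (n : ℚ))
    (hP' : ∀ n : ℕ, n₀ ≤ n → ∑ l ∈ Finset.range (p' * n), (c l : ℚ) = P'.eval (n : ℚ)) :
    P.eval 0 = P'.eval 0 := by
  set Q : Polynomial ℚ := P.comp (Polynomial.C (p' : ℚ) * Polynomial.X)
  set Q' : Polynomial ℚ := P'.comp (Polynomial.C (p : ℚ) * Polynomial.X)
  have hQQ' : Q = Q' := by
    have hroot : ∀ n : ℕ, n₀ ≤ n → (Q - Q').IsRoot (n : ℚ) := by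
      intro n hn
      have h1 : n₀ ≤ p' * n := le_trans hn (Nat.le_mul_of_pos_left n hp')
      have h2 : n₀ ≤ p * n := le_trans hn (Nat.le_mul_of_pos_left n hp)
      have e1 := hP (p' * n) h1
      have e2 := hP' (p * n) h2
      have : P.eval ((p' : ℚ) * n) = P'.eval ((p : ℚ) * n) := by
        rw [← Nat.cast_mul, ← e1, ← Nat.cast_mul, ← e2, mul_comm p' (p * n),
          mul_assoc, mul_comm n p']
      simp [Polynomial.IsRoot, Q, Q', Polynomial.eval_comp, this]
    have : (Q - Q') = 0 := by
      apply Polynomial.eq_zero_of_infinite_isRoot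
      apply Set.Infinite.mono (s := (fun n : ℕ => (n : ℚ)) '' {n | n₀ ≤ n})
      · rintro x ⟨n, hn, rfl⟩; exact hroot n hn
      · apply Set.Infinite.image
        · intro a _ b _ h; exact Nat.cast_injective h
        · exact Set.Ici_infinite n₀
    exact sub_eq_zero.mp this
  have h0 : Q.eval 0 = Q'.eval 0 := by rw [hQQ']
  simpa [Q, Q', Polynomial.eval_comp] using h0
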